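/- Let Δ be a 2-dimensional Buchsbaum simplicial complex and F = {a,b,c} a 3-element set, and set Γ = Δ ∪ ⟨F⟩. If Δ ∩ ⟨F⟩ = ⟨{a,b}⟩, then Γ is Buchsbaum and h(Γ) = h(Δ) + (0,1,0,0). -/

import Mathlib

open Finset

noncomputable section

/-- `Δ` is a simplicial complex on `[n] = {1,…,n}`: a collection of subsets of `[n]`,
closed under taking subsets, containing every singleton `{i}` for `i ∈ [n]`. -/
def IsComplexOn (n : ℕ) (Δ : Finset (Finset ℕ)) : Prop :=
  (∀ F ∈ Δ, ∀ G ⊆ F, G ∈ Δ) ∧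
  (∀ F ∈ Δ, ∀ i ∈ F, i ∈ Finset.Icc 1 n) ∧
  (∀ i ∈ Finset.Icc 1 n, ({i} : Finset ℕ) ∈ Δ)

/-- a simplicial complex whose vertex set is contained in `[n]`:
a downward closed collection of subsets of `[n]`. -/
def IsComplexIn (n : ℕ) (Δ : Finset (Finset ℕ)) : Prop :=
  (∀ F ∈ Δ, ∀ G ⊆ F, G ∈ Δ) ∧ (∀ F ∈ Δ, ∀ i ∈ F, i ∈ Finset.Icc 1 n)

/-- the faces of `Δ` with `m` vertices -/
def facesOf (Δ : Finset (Finset ℕ)) (m : ℕ) : Finset (Finset ℕ) :=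
  Δ.filter fun F => F.card = m

/-- `fVec Δ j = f_{j-1}(Δ)`, the number of faces of `Δ` with `j` vertices;
by convention `f_{-1}(Δ) = 1`. -/
def fVec (Δ : Finset (Finset ℕ)) (j : ℕ) : ℤ :=
  if j = 0 then 1 else ((facesOf Δ j).card : ℤ)

/-- the `h`-vector of a `(d-1)`-dimensional complex, defined by
`∑ f_{i-1} (x-1)^{d-i} = ∑ h_i x^{d-i}`, i.e.
`h_i = ∑_{j=0}^{i} (-1)^{i-j} C(d-j, i-j) f_{j-1}`. -/
def hVec (d : ℕ) (Δ : Finset (Finset ℕ)) (i : ℕ) : ℤ :=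
  ∑ j ∈ Finset.range (i + 1),
    (-1 : ℤ) ^ (i - j) * ((d - j).choose (i - j) : ℤ) * fVec Δ j

/-- the dimension `max {k : f_k(Δ) ≠ 0}` of `Δ`, as an integer -/
def dimZ (Δ : Finset (Finset ℕ)) : ℤ := ((Δ.sup Finset.card : ℕ) : ℤ) - 1

/-- the link `lk_Δ(F) = {G : G ∩ F = ∅, G ∪ F ∈ Δ}` -/
def link (Δ : Finset (Finset ℕ)) (F : Finset ℕ) : Finset (Finset ℕ) :=
  Δ.filter fun G => Disjoint G F ∧ G ∪ F ∈ Δ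

variable (K : Type) [Field K]

/-- the simplicial boundary operator on formal `K`-linear combinations of
finite subsets of `ℕ` (vertices ordered by the order on `ℕ`):
`∂ F = ∑_{v ∈ F} (-1)^{#{u ∈ F : u < v}} (F \ {v})`. -/
def bdry : (Finset ℕ →₀ K) →ₗ[K] (Finset ℕ →₀ K) :=
  Finsupp.lsum K fun F => LinearMap.toSpanSingleton K (Finset ℕ →₀ K)
    (∑ v ∈ F, ((-1 : K) ^ ((F.filter fun u => u < v).card)) • Finsupp.single (F.erase v) (1 : K))

/-- the space of simplicial `K`-chains of `Δ` spanned by the faces with `m` vertices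
(for `m = 0` this is the span of the empty face, giving *reduced* homology) -/
def chains (Δ : Finset (Finset ℕ)) (m : ℕ) : Submodule K (Finset ℕ →₀ K) :=
  Submodule.span K ((fun F => Finsupp.single F (1 : K)) '' (facesOf Δ m : Set (Finset ℕ)))

/-- the dimension of the reduced homology of `Δ` at faces of cardinality `m`:
`dim (ker ∂ ∩ C_m) - dim (∂ C_{m+1})` -/
def homDim (Δ : Finset (Finset ℕ)) (m : ℕ) : ℕ :=
  Module.finrank K ↥(chains K Δ m ⊓ LinearMap.ker (bdry K))
    - Module.finrank K ↥((chains K Δ (m + 1)).map (bdry K))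

/-- the reduced Betti number `β_i(Δ; K) = dim_K H̃_i(Δ; K)` for `i : ℤ` -/
def betti (Δ : Finset (Finset ℕ)) (i : ℤ) : ℕ :=
  if 0 ≤ i + 1 then homDim K Δ (i + 1).toNat else 0

/-- all facets (maximal faces) of `Δ` have the same cardinality -/
def IsPure (Δ : Finset (Finset ℕ)) : Prop :=
  ∀ F ∈ Δ, (∀ G ∈ Δ, F ⊆ G → F = G) → F.card = Δ.sup Finset.card

/-- `Δ` is Cohen–Macaulay (over `K`): for every face `F ∈ Δ` (including `∅`),
`β_i(lk_Δ(F)) = 0` for all `i ≠ dim Δ - |F|`. -/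
def IsCohenMacaulay (Δ : Finset (Finset ℕ)) : Prop :=
  ∀ F ∈ Δ, ∀ i : ℤ, i ≠ dimZ Δ - F.card → betti K (link Δ F) i = 0

/-- `Δ` is Buchsbaum (over `K`): `Δ` is pure and the link of every vertex is
Cohen–Macaulay. -/
def IsBuchsbaum (Δ : Finset (Finset ℕ)) : Prop :=
  IsPure Δ ∧ ∀ v : ℕ, ({v} : Finset ℕ) ∈ Δ → IsCohenMacaulay K (link Δ {v})

/-- `Δ` is connected: any two vertices are joined by a path of edges of `Δ` -/
def IsConnectedComplex (Δ : Finset (Finset ℕ)) : Prop :=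
  ∀ u v : ℕ, ({u} : Finset ℕ) ∈ Δ → ({v} : Finset ℕ) ∈ Δ →
    Relation.ReflTransGen (fun a b : ℕ => a ≠ b ∧ ({a, b} : Finset ℕ) ∈ Δ) u v

/-- `Δ` is link-acyclic: `β_i(lk_Δ(v)) = 0` for every vertex `v` of `Δ` and every `i` -/
def IsLinkAcyclic (Δ : Finset (Finset ℕ)) : Prop :=
  ∀ v : ℕ, ({v} : Finset ℕ) ∈ Δ → ∀ i : ℤ, betti K (link Δ {v}) i = 0

/-- `Δ` is `2`-dimensional with `h`-vector `(a, b, c, e)` -/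
def hVector3 (Δ : Finset (Finset ℕ)) (a b c e : ℤ) : Prop :=
  hVec 3 Δ 0 = a ∧ hVec 3 Δ 1 = b ∧ hVec 3 Δ 2 = c ∧ hVec 3 Δ 3 = e

/-- `macaulay2 a = a^⟨2⟩`: if `a = C(b,2) + r` is the (greedy) `2`-nd Macaulay
representation (`b` maximal with `C(b,2) ≤ a`, `0 ≤ r < b`, `r = C(r,1)`), then
`a^⟨2⟩ = C(b+1,3) + C(r+1,2)`, and `0^⟨2⟩ = 0`. -/
def macaulay2 (a : ℕ) : ℕ :=
  if a = 0 then 0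
  else
    (Nat.findGreatest (fun t => t.choose 2 ≤ a) (a + 2) + 1).choose 3
      + (a - (Nat.findGreatest (fun t => t.choose 2 ≤ a) (a + 2)).choose 2 + 1).choose 2

/-- `modRep n i = ī`, the unique element of `[n] = {1,…,n}` congruent to `i` mod `n` -/
def modRep (n : ℕ) (i : ℤ) : ℕ := ((i - 1) % (n : ℤ)).toNat + 1


end

noncomputable section Aux
open Finsupp Submodule
variable (K : Type) [Field K]

lemma bdry_single (F : Finset ℕ) :
    bdry K (Finsupp.single F (1 : K)) =
      ∑ v ∈ F, ((-1 : K) ^ ((F.filter fun u => u < v).card)) • Finsupp.single (F.erase v) (1 : K) := by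
  simp [bdry, Finsupp.lsum_single, LinearMap.toSpanSingleton_apply]

lemma bdry_single_empty : bdry K (Finsupp.single (∅ : Finset ℕ) (1 : K)) = 0 := by
  rw [bdry_single]; simp

lemma bdry_single_vertex (v : ℕ) :
    bdry K (Finsupp.single ({v} : Finset ℕ) (1 : K)) = Finsupp.single (∅ : Finset ℕ) (1 : K) := by
  rw [bdry_single]; simp [Finset.filter_singleton]

lemma single_one_ne_zero (F : Finset ℕ) : Finsupp.single F (1 : K) ≠ 0 := by
  simp [Finsupp.single_eq_zero]

lemma finrank_sup_span_singleton {V : Type} [AddCommGroup V] [Module K V]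
    (s : Submodule K V) [FiniteDimensional K s] (x : V) (φ : V →ₗ[K] K)
    (hs : s ≤ LinearMap.ker φ) (hx : φ x ≠ 0) :
    Module.finrank K ↥(s ⊔ Submodule.span K {x}) = Module.finrank K ↥s + 1 := by
  have hx0 : x ≠ 0 := fun h => hx (by simp [h])
  haveI := FiniteDimensional.span_of_finite K (Set.finite_singleton x)
  have hinf : s ⊓ Submodule.span K {x} = ⊥ := by
    rw [eq_bot_iff]
    rintro y hy
    rw [Submodule.mem_inf] at hy
    obtain ⟨t, rfl⟩ := Submodule.mem_span_singleton.1 hy.2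
    have h2 := hs hy.1
    rw [LinearMap.mem_ker, map_smul, smul_eq_mul] at h2
    rcases mul_eq_zero.1 h2 with h | h
    · simp [h]
    · exact absurd h hx
  have h3 := Submodule.finrank_sup_add_finrank_inf_eq s (Submodule.span K {x})
  rw [hinf] at h3
  simpa [finrank_span_singleton hx0] using h3

lemma betti_zero_of_no_face (X : Finset (Finset ℕ)) (i : ℤ)
    (h : ∀ G ∈ X, (G.card : ℤ) ≠ i + 1) : betti K X i = 0 := by
  unfold betti
  split_ifs with h0
  · unfold homDim
    have hf : facesOf X (i + 1).toNat = ∅ := by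
      apply Finset.filter_eq_empty_iff.2
      intro G hG hcard
      exact h G hG (by rw [hcard, Int.toNat_of_nonneg h0])
    have hc : chains K X (i + 1).toNat = ⊥ := by
      rw [chains, hf]; simp
    rw [hc, bot_inf_eq, finrank_bot, Nat.zero_sub]
  · rfl

lemma homDim_zero_eq (X : Finset (Finset ℕ)) (h0 : (∅ : Finset ℕ) ∈ X) (v : ℕ)
    (hv : ({v} : Finset ℕ) ∈ X) : homDim K X 0 = 0 := by
  have hf0 : facesOf X 0 = {∅} := by
    ext G
    simp only [facesOf, Finset.mem_filter, Finset.card_eq_zero, Finset.mem_singleton]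
    exact ⟨fun h => h.2, fun h => ⟨h ▸ h0, h⟩⟩
  have hc0 : chains K X 0 = Submodule.span K {Finsupp.single (∅ : Finset ℕ) (1 : K)} := by
    rw [chains, hf0]; simp
  have hker : Submodule.span K {Finsupp.single (∅ : Finset ℕ) (1 : K)} ≤ LinearMap.ker (bdry K) := by
    rw [Submodule.span_le, Set.singleton_subset_iff]
    exact LinearMap.mem_ker.2 (bdry_single_empty K)
  have h1 : Module.finrank K ↥(chains K X 0 ⊓ LinearMap.ker (bdry K)) = 1 := by
    rw [hc0, inf_eq_left.2 hker]
    exact finrank_span_singleton (single_one_ne_zero K ∅)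
  have h2 : (chains K X 1).map (bdry K) = Submodule.span K {Finsupp.single (∅ : Finset ℕ) (1 : K)} := by
    rw [chains, Submodule.map_span]
    apply le_antisymm
    · rw [Submodule.span_le]
      rintro y ⟨x, ⟨G, hG, rfl⟩, rfl⟩
      simp only [facesOf, Finset.coe_filter, Set.mem_setOf_eq] at hG
      obtain ⟨u, rfl⟩ := Finset.card_eq_one.1 hG.2
      rw [bdry_single_vertex]
      exact Submodule.subset_span rfl
    · rw [Submodule.span_le, Set.singleton_subset_iff]
      apply Submodule.subset_span
      refine ⟨Finsupp.single ({v} : Finset ℕ) (1 : K), ⟨{v}, ?_, rfl⟩, bdry_single_vertex K v⟩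
      simp only [facesOf, Finset.coe_filter, Set.mem_setOf_eq]
      exact ⟨hv, Finset.card_singleton v⟩
  unfold homDim
  rw [h1, h2, finrank_span_singleton (single_one_ne_zero K ∅)]

lemma betti_neg_one (X : Finset (Finset ℕ)) (h0 : (∅ : Finset ℕ) ∈ X) (v : ℕ)
    (hv : ({v} : Finset ℕ) ∈ X) : betti K X (-1) = 0 := by
  have : betti K X (-1) = homDim K X 0 := by norm_num [betti]
  rw [this]
  exact homDim_zero_eq K X h0 v hv

lemma chains_fd (X : Finset (Finset ℕ)) (m : ℕ) : FiniteDimensional K ↥(chains K X m) := by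
  unfold chains
  exact FiniteDimensional.span_of_finite K ((Finset.finite_toSet _).image _)

lemma facesOf_union (X Y : Finset (Finset ℕ)) (m : ℕ) :
    facesOf (X ∪ Y) m = facesOf X m ∪ facesOf Y m := Finset.filter_union _ _ _

lemma facesOf_pair_one (b c : ℕ) :
    facesOf (({b, c} : Finset ℕ).powerset) 1 = {{b}, {c}} := by
  ext G
  simp only [facesOf, Finset.mem_filter, Finset.mem_powerset, Finset.mem_insert,
    Finset.mem_singleton]
  constructor
  · rintro ⟨h1, h2⟩
    obtain ⟨u, rfl⟩ := Finset.card_eq_one.1 h2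
    have hu := h1 (Finset.mem_singleton_self u)
    simp only [Finset.mem_insert, Finset.mem_singleton] at hu
    rcases hu with rfl | rfl
    · exact Or.inl rfl
    · exact Or.inr rfl
  · rintro (rfl | rfl)
    · exact ⟨by simp, rfl⟩
    · exact ⟨by simp, rfl⟩

lemma facesOf_pair_two (b c : ℕ) (hbc : b ≠ c) :
    facesOf (({b, c} : Finset ℕ).powerset) 2 = {{b, c}} := by
  ext G
  simp only [facesOf, Finset.mem_filter, Finset.mem_powerset, Finset.mem_singleton]
  constructor
  · rintro ⟨h1, h2⟩
    exact Finset.eq_of_subset_of_card_le h1 (by rw [Finset.card_pair hbc, h2])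
  · rintro rfl
    exact ⟨subset_rfl, Finset.card_pair hbc⟩

lemma homDim_one_pendant (L : Finset (Finset ℕ)) (b c : ℕ) (hbc : b ≠ c)
    (hb : ({b} : Finset ℕ) ∈ L) (hc : ∀ G ∈ L, c ∉ G) :
    homDim K (L ∪ ({b, c} : Finset ℕ).powerset) 1 = homDim K L 1 := by
  have hbcne : ({b} : Finset ℕ) ≠ {c} := fun h => hbc (Finset.singleton_injective h)
  have hbF : ({b} : Finset ℕ) ∈ facesOf L 1 := Finset.mem_filter.2 ⟨hb, Finset.card_singleton b⟩
  have hbCh : Finsupp.single ({b} : Finset ℕ) (1 : K) ∈ chains K L 1 :=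
    Submodule.subset_span ⟨{b}, Finset.mem_coe.2 hbF, rfl⟩
  -- faces of the enlarged complex
  have hf1 : facesOf (L ∪ ({b, c} : Finset ℕ).powerset) 1 = insert {c} (facesOf L 1) := by
    rw [facesOf_union, facesOf_pair_one]
    ext G
    simp only [Finset.mem_union, Finset.mem_insert, Finset.mem_singleton]
    constructor
    · rintro (h | rfl | rfl)
      · exact Or.inr h
      · exact Or.inr hbF
      · exact Or.inl rfl
    · rintro (rfl | h)
      · exact Or.inr (Or.inr rfl)
      · exact Or.inl h
  have hf2 : facesOf (L ∪ ({b, c} : Finset ℕ).powerset) 2 = insert {b, c} (facesOf L 2) := by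
    rw [facesOf_union, facesOf_pair_two b c hbc, Finset.union_comm]
    ext G
    simp
  -- chains
  have hch1 : chains K (L ∪ ({b, c} : Finset ℕ).powerset) 1 =
      chains K L 1 ⊔ Submodule.span K {Finsupp.single ({c} : Finset ℕ) (1 : K)} := by
    rw [chains, chains, hf1, Finset.coe_insert, Set.image_insert_eq, Submodule.span_insert,
      sup_comm]
  have hch2 : Submodule.map (bdry K) (chains K (L ∪ ({b, c} : Finset ℕ).powerset) 2) =
      Submodule.map (bdry K) (chains K L 2) ⊔
        Submodule.span K {bdry K (Finsupp.single ({b, c} : Finset ℕ) (1 : K))} := by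
    rw [chains, chains, hf2, Finset.coe_insert, Set.image_insert_eq, Submodule.map_span,
      Set.image_insert_eq, Submodule.span_insert, ← Submodule.map_span, sup_comm]
  -- the evaluation functional at {c}
  set φ : (Finset ℕ →₀ K) →ₗ[K] K := Finsupp.lapply ({c} : Finset ℕ) with hφ
  have hker1 : chains K L 1 ≤ LinearMap.ker φ := by
    rw [chains, Submodule.span_le]
    rintro y ⟨G, hG, rfl⟩
    have hGL : G ∈ L := (Finset.mem_filter.1 (Finset.mem_coe.1 hG)).1
    have hGc : G ≠ {c} := fun h => hc G hGL (h ▸ Finset.mem_singleton_self c)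
    simp [hφ, Finsupp.lapply_apply, LinearMap.mem_ker, Finsupp.single_eq_of_ne' hGc]
  have hkerW : Submodule.map (bdry K) (chains K L 2) ≤ LinearMap.ker φ := by
    rw [chains, Submodule.map_span, Submodule.span_le]
    rintro y ⟨x, ⟨G, hG, rfl⟩, rfl⟩
    have hGL : G ∈ L := (Finset.mem_filter.1 (Finset.mem_coe.1 hG)).1
    rw [SetLike.mem_coe, LinearMap.mem_ker, bdry_single, map_sum]
    apply Finset.sum_eq_zero
    intro v hv
    have hGe : G.erase v ≠ {c} := fun h =>
      hc G hGL (Finset.erase_subset v G (h ▸ Finset.mem_singleton_self c))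
    simp [hφ, Finsupp.lapply_apply, Finsupp.single_eq_of_ne' hGe]
  -- the cycle joining the new vertex to b
  set e : Finset ℕ →₀ K :=
    Finsupp.single ({c} : Finset ℕ) (1 : K) - Finsupp.single ({b} : Finset ℕ) (1 : K) with he
  have hee : bdry K e = 0 := by
    rw [he, map_sub, bdry_single_vertex, bdry_single_vertex, sub_self]
  have hφe : φ e = 1 := by
    rw [he, map_sub]
    simp [hφ, Finsupp.lapply_apply, Finsupp.single_eq_of_ne' hbcne]
  have hbCh' : Finsupp.single ({b} : Finset ℕ) (1 : K) ∈
      chains K (L ∪ ({b, c} : Finset ℕ).powerset) 1 := by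
    rw [hch1]; exact Submodule.mem_sup_left hbCh
  have hcCh : Finsupp.single ({c} : Finset ℕ) (1 : K) ∈
      chains K (L ∪ ({b, c} : Finset ℕ).powerset) 1 := by
    rw [hch1]; exact Submodule.mem_sup_right (Submodule.mem_span_singleton_self _)
  have heCh : e ∈ chains K (L ∪ ({b, c} : Finset ℕ).powerset) 1 := by
    rw [he]; exact sub_mem hcCh hbCh'
  have hVeq : chains K (L ∪ ({b, c} : Finset ℕ).powerset) 1 ⊓ LinearMap.ker (bdry K) =
      (chains K L 1 ⊓ LinearMap.ker (bdry K)) ⊔ Submodule.span K {e} := by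
    apply le_antisymm
    · intro y hy
      rw [Submodule.mem_inf, hch1] at hy
      obtain ⟨x, hx, z, hz, rfl⟩ := Submodule.mem_sup.1 hy.1
      obtain ⟨t, rfl⟩ := Submodule.mem_span_singleton.1 hz
      have hdec : x + t • Finsupp.single ({c} : Finset ℕ) (1 : K)
          = (x + t • Finsupp.single ({b} : Finset ℕ) (1 : K)) + t • e := by
        rw [he, smul_sub]; abel
      rw [hdec]
      apply Submodule.add_mem
      · apply Submodule.mem_sup_left
        rw [Submodule.mem_inf]
        refine ⟨add_mem hx (Submodule.smul_mem _ _ hbCh), ?_⟩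
        have h2 : bdry K (x + t • Finsupp.single ({c} : Finset ℕ) (1 : K)) = 0 := hy.2
        rw [hdec, map_add, map_smul, hee, smul_zero, add_zero] at h2
        exact LinearMap.mem_ker.2 h2
      · exact Submodule.mem_sup_right
          (Submodule.smul_mem _ _ (Submodule.mem_span_singleton_self e))
    · apply sup_le
      · exact inf_le_inf_right _ (by rw [hch1]; exact le_sup_left)
      · rw [Submodule.span_le, Set.singleton_subset_iff]
        exact Submodule.mem_inf.2 ⟨heCh, LinearMap.mem_ker.2 hee⟩
  have hw : φ (bdry K (Finsupp.single ({b, c} : Finset ℕ) (1 : K)))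
      = (-1 : K) ^ ((({b, c} : Finset ℕ).filter fun u => u < b).card) := by
    rw [bdry_single, map_sum]
    rw [show ({b, c} : Finset ℕ) = insert b {c} from rfl]
    rw [Finset.sum_insert (by simp [hbc]), Finset.sum_singleton, map_smul, map_smul]
    rw [Finset.erase_insert (by simp [hbc]), Finset.erase_insert_of_ne hbc,
      Finset.erase_singleton]
    simp [hφ, Finsupp.lapply_apply, Finsupp.single_eq_of_ne' hbcne, smul_eq_mul]
  have hφw : φ (bdry K (Finsupp.single ({b, c} : Finset ℕ) (1 : K))) ≠ 0 := by
    rw [hw]; exact pow_ne_zero _ (neg_ne_zero.2 one_ne_zero)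
  haveI := chains_fd K L 1
  haveI := chains_fd K L 2
  haveI fdV : FiniteDimensional K ↥(chains K L 1 ⊓ LinearMap.ker (bdry K)) :=
    Submodule.finiteDimensional_of_le inf_le_left
  haveI fdW : FiniteDimensional K ↥(Submodule.map (bdry K) (chains K L 2)) := by
    rw [chains, Submodule.map_span]
    exact FiniteDimensional.span_of_finite K (((Finset.finite_toSet _).image _).image _)
  unfold homDim
  simp only [Nat.reduceAdd]
  rw [hVeq, hch2]
  rw [finrank_sup_span_singleton K _ e φ (le_trans inf_le_left hker1)
    (by rw [hφe]; exact one_ne_zero)]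
  rw [finrank_sup_span_singleton K _ _ φ hkerW hφw]
  omega

lemma link_empty_face (X : Finset (Finset ℕ)) : link X ∅ = X := by
  ext G; simp [link]

lemma betti_zero_eq (X : Finset (Finset ℕ)) : betti K X 0 = homDim K X 1 := by
  norm_num [betti]

lemma homDim_one_point (bn : ℕ) : homDim K (({bn} : Finset ℕ).powerset) 1 = 0 := by
  have hf : facesOf (({bn} : Finset ℕ).powerset) 1 = {{bn}} := by
    ext G
    simp only [facesOf, Finset.mem_filter, Finset.mem_powerset, Finset.mem_singleton]
    constructor
    · rintro ⟨h1, h2⟩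
      exact Finset.eq_of_subset_of_card_le h1 (by rw [h2, Finset.card_singleton])
    · rintro rfl
      exact ⟨subset_rfl, rfl⟩
  have hinf : chains K (({bn} : Finset ℕ).powerset) 1 ⊓ LinearMap.ker (bdry K) = ⊥ := by
    rw [eq_bot_iff]
    intro y hy
    rw [Submodule.mem_inf] at hy
    have h1 := hy.1
    rw [chains, hf] at h1
    simp only [Finset.coe_singleton, Set.image_singleton] at h1
    obtain ⟨t, rfl⟩ := Submodule.mem_span_singleton.1 h1
    have h2 := hy.2
    rw [LinearMap.mem_ker, map_smul, bdry_single_vertex] at h2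
    rcases smul_eq_zero.1 h2 with h | h
    · simp [h]
    · exact absurd h (single_one_ne_zero K ∅)
  unfold homDim
  rw [hinf, finrank_bot, Nat.zero_sub]

lemma link_pair_powerset (x y : ℕ) (hxy : x ≠ y) :
    link (({x, y} : Finset ℕ).powerset) {x} = ({y} : Finset ℕ).powerset := by
  ext G
  simp only [link, Finset.mem_filter, Finset.mem_powerset]
  constructor
  · rintro ⟨h1, h2, h3⟩
    intro u hu
    have hu2 := h1 hu
    rcases Finset.mem_insert.1 hu2 with rfl | hu3
    · exact absurd (Finset.mem_singleton_self u) (Finset.disjoint_left.1 h2 hu)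
    · exact hu3
  · intro hG
    have hGxy : G ⊆ {x, y} := hG.trans (by intro u hu; simp at hu; simp [hu])
    refine ⟨hGxy, ?_, ?_⟩
    · exact Finset.disjoint_singleton_right.2
        (fun hx => hxy (Finset.mem_singleton.1 (hG hx)))
    · exact Finset.union_subset hGxy (by intro u hu; simp at hu; simp [hu])

lemma cm_powerset_pair (a b : ℕ) (hab : a ≠ b) :
    IsCohenMacaulay K (({a, b} : Finset ℕ).powerset) := by
  have hsup : (({a, b} : Finset ℕ).powerset).sup Finset.card = 2 := by
    apply le_antisymm
    · exact Finset.sup_le fun G hG =>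
        (Finset.card_le_card (Finset.mem_powerset.1 hG)).trans_eq (Finset.card_pair hab)
    · exact (Finset.card_pair hab).symm.trans_le (Finset.le_sup (Finset.mem_powerset_self _))
  have hdimZ : dimZ (({a, b} : Finset ℕ).powerset) = 1 := by rw [dimZ, hsup]; rfl
  intro F hF i hi
  rw [hdimZ] at hi
  rw [Finset.mem_powerset] at hF
  have hcardF : F.card ≤ 2 :=
    (Finset.card_le_card hF).trans_eq (Finset.card_pair hab)
  have hc3 : F.card = 0 ∨ F.card = 1 ∨ F.card = 2 := by omega
  rcases hc3 with h | h | h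
  · -- F = ∅
    have hFe : F = ∅ := Finset.card_eq_zero.1 h
    subst hFe
    rw [link_empty_face]
    rw [Finset.card_empty] at hi
    rcases eq_or_ne i (-1) with rfl | hne1
    · exact betti_neg_one K _ (Finset.empty_mem_powerset _) a
        (Finset.mem_powerset.2 (by simp))
    rcases eq_or_ne i 0 with rfl | hne0
    · rw [betti_zero_eq]
      have hun : ({b} : Finset ℕ).powerset ∪ ({b, a} : Finset ℕ).powerset
          = ({a, b} : Finset ℕ).powerset := by
        rw [Finset.pair_comm b a]
        exact Finset.union_eq_right.2 (Finset.powerset_mono.2 (by simp))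
      rw [← hun, homDim_one_pendant K (({b} : Finset ℕ).powerset) b a (Ne.symm hab)
        (Finset.mem_powerset_self _)
        (fun G hG haG => hab (Finset.mem_singleton.1 (Finset.mem_powerset.1 hG haG)))]
      exact homDim_one_point K b
    · apply betti_zero_of_no_face
      intro G hG
      have : G.card ≤ 2 :=
        (Finset.card_le_card (Finset.mem_powerset.1 hG)).trans_eq (Finset.card_pair hab)
      omega
  · -- F a vertex
    obtain ⟨v, rfl⟩ := Finset.card_eq_one.1 h
    rw [Finset.card_singleton] at hi
    have hv : v ∈ ({a, b} : Finset ℕ) := hF (Finset.mem_singleton_self v)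
    have hlink : ∃ y : ℕ, link (({a, b} : Finset ℕ).powerset) {v} = ({y} : Finset ℕ).powerset := by
      rcases Finset.mem_insert.1 hv with rfl | hv2
      · exact ⟨b, link_pair_powerset v b hab⟩
      · rw [Finset.mem_singleton] at hv2
        subst hv2
        refine ⟨a, ?_⟩
        rw [Finset.pair_comm a v]
        exact link_pair_powerset v a (Ne.symm hab)
    obtain ⟨y, hy⟩ := hlink
    rw [hy]
    rcases eq_or_ne i (-1) with rfl | hne1
    · exact betti_neg_one K _ (Finset.empty_mem_powerset _) y (Finset.mem_powerset_self _)
    · apply betti_zero_of_no_face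
      intro G hG
      have : G.card ≤ 1 :=
        (Finset.card_le_card (Finset.mem_powerset.1 hG)).trans_eq (Finset.card_singleton y)
      omega
  · -- F = {a, b}
    have hFe : F = {a, b} :=
      Finset.eq_of_subset_of_card_le hF (by rw [Finset.card_pair hab, h])
    subst hFe
    rw [Finset.card_pair hab] at hi
    have hlink : link (({a, b} : Finset ℕ).powerset) {a, b} = {∅} := by
      ext G
      simp only [link, Finset.mem_filter, Finset.mem_powerset, Finset.mem_singleton]
      constructor
      · rintro ⟨h1, h2, h3⟩
        have : G ⊆ ∅ := fun u hu => absurd (h1 hu) (Finset.disjoint_left.1 h2 hu)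
        exact Finset.subset_empty.1 this
      · rintro rfl
        exact ⟨Finset.empty_subset _, Finset.disjoint_empty_left _, by simp⟩
    rw [hlink]
    apply betti_zero_of_no_face
    intro G hG
    rw [Finset.mem_singleton] at hG
    subst hG
    rw [Finset.card_empty]
    omega

lemma cm_pendant (L : Finset (Finset ℕ)) (b c : ℕ) (hbc : b ≠ c)
    (hdown : ∀ F ∈ L, ∀ G ⊆ F, G ∈ L) (h0 : (∅ : Finset ℕ) ∈ L) (hb : ({b} : Finset ℕ) ∈ L)
    (hc : ∀ G ∈ L, c ∉ G) (hsup : L.sup Finset.card = 2) (hCM : IsCohenMacaulay K L) :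
    IsCohenMacaulay K (L ∪ ({b, c} : Finset ℕ).powerset) := by
  have hdimL : dimZ L = 1 := by rw [dimZ, hsup]; rfl
  have hsupP : (({b, c} : Finset ℕ).powerset).sup Finset.card = 2 := by
    apply le_antisymm
    · exact Finset.sup_le fun G hG =>
        (Finset.card_le_card (Finset.mem_powerset.1 hG)).trans_eq (Finset.card_pair hbc)
    · exact (Finset.card_pair hbc).symm.trans_le (Finset.le_sup (Finset.mem_powerset_self _))
  have hsup' : (L ∪ ({b, c} : Finset ℕ).powerset).sup Finset.card = 2 := by
    rw [Finset.sup_union, hsup, hsupP]; rfl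
  have hdim' : dimZ (L ∪ ({b, c} : Finset ℕ).powerset) = 1 := by rw [dimZ, hsup']; rfl
  have hcard' : ∀ G ∈ L ∪ ({b, c} : Finset ℕ).powerset, G.card ≤ 2 := fun G hG =>
    hsup' ▸ Finset.le_sup hG
  intro F hF i hi
  rw [hdim'] at hi
  have hFc : F.card ≤ 2 := hcard' F hF
  have hc3 : F.card = 0 ∨ F.card = 1 ∨ F.card = 2 := by omega
  rcases hc3 with h | h | h
  · -- F = ∅
    have hFe : F = ∅ := Finset.card_eq_zero.1 h
    subst hFe
    rw [link_empty_face]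
    rw [Finset.card_empty] at hi
    rcases eq_or_ne i (-1) with rfl | hne1
    · exact betti_neg_one K _ (Finset.mem_union_left _ h0) b (Finset.mem_union_left _ hb)
    rcases eq_or_ne i 0 with rfl | hne0
    · rw [betti_zero_eq, homDim_one_pendant K L b c hbc hb hc]
      have hL0 := hCM ∅ h0 0 (by rw [hdimL]; norm_num)
      rw [link_empty_face, betti_zero_eq] at hL0
      exact hL0
    · apply betti_zero_of_no_face
      intro G hG
      have := hcard' G hG
      omega
  · -- vertex
    obtain ⟨v, rfl⟩ := Finset.card_eq_one.1 h
    rw [Finset.card_singleton] at hi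
    rcases eq_or_ne v c with rfl | hvc
    · have hlink : link (L ∪ ({b, v} : Finset ℕ).powerset) {v} = ({b} : Finset ℕ).powerset := by
        ext G
        simp only [link, Finset.mem_filter, Finset.mem_union, Finset.mem_powerset]
        constructor
        · rintro ⟨hG, hdis, hun⟩
          rcases hun with h1 | h1
          · exact absurd (Finset.mem_union_right G (Finset.mem_singleton_self v))
              (hc _ h1)
          · intro u hu
            have hu2 := h1 (Finset.mem_union_left _ hu)
            rcases Finset.mem_insert.1 hu2 with rfl | h2
            · exact Finset.mem_singleton_self u
            · rw [Finset.mem_singleton] at h2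
              subst h2
              exact absurd (Finset.mem_singleton_self u) (Finset.disjoint_left.1 hdis hu)
        · intro hG
          have hGbc : G ⊆ {b, v} := hG.trans (by intro u hu; simp at hu; simp [hu])
          refine ⟨Or.inr hGbc, ?_, Or.inr ?_⟩
          · exact Finset.disjoint_singleton_right.2
              (fun hcc => hbc (Finset.mem_singleton.1 (hG hcc)).symm)
          · exact Finset.union_subset hGbc (by intro u hu; simp at hu; simp [hu])
      rw [hlink]
      rcases eq_or_ne i (-1) with rfl | hne1
      · exact betti_neg_one K _ (Finset.empty_mem_powerset _) b (Finset.mem_powerset_self _)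
      · apply betti_zero_of_no_face
        intro G hG
        have : G.card ≤ 1 :=
          (Finset.card_le_card (Finset.mem_powerset.1 hG)).trans_eq (Finset.card_singleton b)
        omega
    · rcases eq_or_ne v b with rfl | hvb
      · rcases eq_or_ne i (-1) with rfl | hne1
        · refine betti_neg_one K _ ?_ c ?_
          · refine Finset.mem_filter.2 ⟨Finset.mem_union_left _ h0,
              Finset.disjoint_empty_left _, ?_⟩
            rw [Finset.empty_union]
            exact Finset.mem_union_left _ hb
          · refine Finset.mem_filter.2 ⟨Finset.mem_union_right _
              (Finset.mem_powerset.2 (by simp)), Finset.disjoint_singleton.2 (Ne.symm hbc),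
              Finset.mem_union_right _ (Finset.mem_powerset.2 ?_)⟩
            intro u hu
            simp only [Finset.mem_union, Finset.mem_singleton] at hu
            rcases hu with rfl | rfl
            · simp
            · simp
        · apply betti_zero_of_no_face
          intro G hG
          obtain ⟨hG1, hdis, hun⟩ := Finset.mem_filter.1 hG
          have h2 := hcard' _ hun
          have h3 : (G ∪ {v}).card = G.card + 1 := by
            rw [Finset.card_union_of_disjoint hdis, Finset.card_singleton]
          omega
      · -- v ∉ {b, c} : link is unchanged
        have hvL : ({v} : Finset ℕ) ∈ L := by
          rcases Finset.mem_union.1 hF with h1 | h1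
          · exact h1
          · exfalso
            have := Finset.mem_powerset.1 h1 (Finset.mem_singleton_self v)
            rcases Finset.mem_insert.1 this with rfl | hh
            · exact hvb rfl
            · exact hvc (Finset.mem_singleton.1 hh)
        have hlink : link (L ∪ ({b, c} : Finset ℕ).powerset) {v} = link L {v} := by
          ext G
          simp only [link, Finset.mem_filter, Finset.mem_union]
          constructor
          · rintro ⟨hG, hdis, hun⟩
            rcases hun with h1 | h1
            · exact ⟨hdown _ h1 G Finset.subset_union_left, hdis, h1⟩
            · exfalso
              have := Finset.mem_powerset.1 h1
                (Finset.mem_union_right G (Finset.mem_singleton_self v))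
              rcases Finset.mem_insert.1 this with rfl | hh
              · exact hvb rfl
              · exact hvc (Finset.mem_singleton.1 hh)
          · rintro ⟨hG, hdis, hun⟩
            exact ⟨Or.inl hG, hdis, Or.inl hun⟩
        rw [hlink]
        exact hCM {v} hvL i (by rw [hdimL]; simpa using hi)
  · -- edge
    by_cases hFL : F ∈ L
    · have hlink : link (L ∪ ({b, c} : Finset ℕ).powerset) F = link L F := by
        ext G
        simp only [link, Finset.mem_filter, Finset.mem_union]
        constructor
        · rintro ⟨hG, hdis, hun⟩
          rcases hun with h1 | h1
          · exact ⟨hdown _ h1 G Finset.subset_union_left, hdis, h1⟩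
          · exfalso
            have hFsub : F ⊆ {b, c} :=
              Finset.subset_union_right.trans (Finset.mem_powerset.1 h1)
            have hFeq : F = {b, c} :=
              Finset.eq_of_subset_of_card_le hFsub (by rw [Finset.card_pair hbc, h])
            exact hc F hFL (hFeq ▸ by simp)
        · rintro ⟨hG, hdis, hun⟩
          exact ⟨Or.inl hG, hdis, Or.inl hun⟩
      rw [hlink]
      exact hCM F hFL i (by rw [hdimL]; exact hi)
    · have hFP : F ∈ ({b, c} : Finset ℕ).powerset := (Finset.mem_union.1 hF).resolve_left hFL
      have hFe : F = {b, c} :=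
        Finset.eq_of_subset_of_card_le (Finset.mem_powerset.1 hFP)
          (by rw [Finset.card_pair hbc, h])
      subst hFe
      have hlink : link (L ∪ ({b, c} : Finset ℕ).powerset) {b, c} = {∅} := by
        ext G
        simp only [link, Finset.mem_filter, Finset.mem_union, Finset.mem_singleton]
        constructor
        · rintro ⟨hG, hdis, hun⟩
          by_contra hne
          obtain ⟨u, hu⟩ := Finset.nonempty_iff_ne_empty.2 hne
          have h1 : (G ∪ {b, c}).card ≤ 2 := by
            apply hcard'
            rcases hun with h1 | h1
            · exact Finset.mem_union_left _ h1
            · exact Finset.mem_union_right _ h1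
          have h5 : u ∉ ({b, c} : Finset ℕ) := fun hh => Finset.disjoint_left.1 hdis hu hh
          have h6 : insert u ({b, c} : Finset ℕ) ⊆ G ∪ {b, c} :=
            Finset.insert_subset (Finset.mem_union_left _ hu) Finset.subset_union_right
          have h7 : (insert u ({b, c} : Finset ℕ)).card = 3 := by
            rw [Finset.card_insert_of_notMem h5, Finset.card_pair hbc]
          have := Finset.card_le_card h6
          omega
        · rintro rfl
          refine ⟨Or.inl h0, Finset.disjoint_empty_left _, ?_⟩
          rw [Finset.empty_union]
          exact Or.inr (Finset.mem_powerset_self _)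
      rw [hlink]
      apply betti_zero_of_no_face
      intro G hG
      rw [Finset.mem_singleton] at hG
      subst hG
      rw [Finset.card_empty]
      rw [Finset.card_pair hbc] at hi
      omega

lemma facesOf_triple_one (a b c : ℕ) :
    facesOf (({a, b, c} : Finset ℕ).powerset) 1 = {{a}, {b}, {c}} := by
  ext G
  simp only [facesOf, Finset.mem_filter, Finset.mem_powerset, Finset.mem_insert,
    Finset.mem_singleton]
  constructor
  · rintro ⟨h1, h2⟩
    obtain ⟨u, rfl⟩ := Finset.card_eq_one.1 h2
    have hu := h1 (Finset.mem_singleton_self u)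
    simp only [Finset.mem_insert, Finset.mem_singleton] at hu
    rcases hu with rfl | rfl | rfl
    · exact Or.inl rfl
    · exact Or.inr (Or.inl rfl)
    · exact Or.inr (Or.inr rfl)
  · rintro (rfl | rfl | rfl)
    · exact ⟨by intro u hu; simp at hu; simp [hu], rfl⟩
    · exact ⟨by intro u hu; simp at hu; simp [hu], rfl⟩
    · exact ⟨by intro u hu; simp at hu; simp [hu], rfl⟩

lemma facesOf_triple_two (a b c : ℕ) (hab : a ≠ b) (hac : a ≠ c) (hbc : b ≠ c) :
    facesOf (({a, b, c} : Finset ℕ).powerset) 2 = {{a, b}, {a, c}, {b, c}} := by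
  ext G
  simp only [facesOf, Finset.mem_filter, Finset.mem_powerset, Finset.mem_insert,
    Finset.mem_singleton]
  constructor
  · rintro ⟨h1, h2⟩
    obtain ⟨x, y, hxy, rfl⟩ := Finset.card_eq_two.1 h2
    have hx := h1 (Finset.mem_insert_self x {y})
    have hy := h1 (Finset.mem_insert_of_mem (Finset.mem_singleton_self y))
    simp only [Finset.mem_insert, Finset.mem_singleton] at hx hy
    rcases hx with rfl | rfl | rfl <;> rcases hy with rfl | rfl | rfl
    · exact absurd rfl hxy
    · exact Or.inl rfl
    · exact Or.inr (Or.inl rfl)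
    · exact Or.inl (Finset.pair_comm x y)
    · exact absurd rfl hxy
    · exact Or.inr (Or.inr rfl)
    · exact Or.inr (Or.inl (Finset.pair_comm x y))
    · exact Or.inr (Or.inr (Finset.pair_comm x y))
    · exact absurd rfl hxy
  · rintro (rfl | rfl | rfl)
    · exact ⟨by intro u hu; simp at hu; rcases hu with rfl | rfl <;> simp, Finset.card_pair hab⟩
    · exact ⟨by intro u hu; simp at hu; rcases hu with rfl | rfl <;> simp, Finset.card_pair hac⟩
    · exact ⟨by intro u hu; simp at hu; rcases hu with rfl | rfl <;> simp, Finset.card_pair hbc⟩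

lemma card_triple (a b c : ℕ) (hab : a ≠ b) (hac : a ≠ c) (hbc : b ≠ c) :
    ({a, b, c} : Finset ℕ).card = 3 := by
  rw [Finset.card_insert_of_notMem (by simp [hab, hac]), Finset.card_pair hbc]

lemma facesOf_triple_three (a b c : ℕ) (hab : a ≠ b) (hac : a ≠ c) (hbc : b ≠ c) :
    facesOf (({a, b, c} : Finset ℕ).powerset) 3 = {{a, b, c}} := by
  ext G
  simp only [facesOf, Finset.mem_filter, Finset.mem_powerset, Finset.mem_singleton]
  constructor
  · rintro ⟨h1, h2⟩
    exact Finset.eq_of_subset_of_card_le h1 (by rw [card_triple a b c hab hac hbc, h2])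
  · rintro rfl
    exact ⟨subset_rfl, card_triple a b c hab hac hbc⟩

end Aux

/-- **Lemma 2.5.** Let `Δ` be a `2`-dimensional Buchsbaum complex, `F = {a,b,c}`,
and `Γ = Δ ∪ ⟨F⟩`. If `Δ ∩ ⟨F⟩ = ({a, b} : Finset ℕ).powerset` then `Γ` is Buchsbaum
and the `h`-vector changes as stated. -/
theorem stmt10 (K : Type) [Field K] (nn : ℕ) (Δ Γ : Finset (Finset ℕ)) (a b c : ℕ)
    (hΔ : IsComplexOn nn Δ) (hdim : dimZ Δ = 2) (hB : IsBuchsbaum K Δ)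
    (hab : a ≠ b) (hac : a ≠ c) (hbc : b ≠ c)
    (hΓ : Γ = Δ ∪ ({a, b, c} : Finset ℕ).powerset)
    (hcap : Δ ∩ ({a, b, c} : Finset ℕ).powerset = ({a, b} : Finset ℕ).powerset) :
    IsBuchsbaum K Γ ∧ hVec 3 Γ 0 = hVec 3 Δ 0 ∧
      hVec 3 Γ 1 = hVec 3 Δ 1 + 1 ∧
      hVec 3 Γ 2 = hVec 3 Δ 2 ∧
      hVec 3 Γ 3 = hVec 3 Δ 3 := by
  subst hΓ
  have hdownΔ := hΔ.1
  have habΔ : ({a, b} : Finset ℕ) ∈ Δ := by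
    have h1 : ({a, b} : Finset ℕ) ∈ Δ ∩ ({a, b, c} : Finset ℕ).powerset := by
      rw [hcap]; exact Finset.mem_powerset_self _
    exact (Finset.mem_inter.1 h1).1
  have h0Δ : (∅ : Finset ℕ) ∈ Δ := hdownΔ _ habΔ ∅ (Finset.empty_subset _)
  have haΔ : ({a} : Finset ℕ) ∈ Δ := hdownΔ _ habΔ {a} (by simp)
  have hbΔ : ({b} : Finset ℕ) ∈ Δ := hdownΔ _ habΔ {b} (by simp)
  have hcnot : ∀ G ∈ Δ, c ∉ G := by
    intro G hG hcG
    have h1 : ({c} : Finset ℕ) ∈ Δ := hdownΔ _ hG {c} (Finset.singleton_subset_iff.2 hcG)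
    have h2 : ({c} : Finset ℕ) ∈ Δ ∩ ({a, b, c} : Finset ℕ).powerset :=
      Finset.mem_inter.2 ⟨h1, Finset.mem_powerset.2 (by simp)⟩
    rw [hcap] at h2
    have h3 := Finset.mem_powerset.1 h2 (Finset.mem_singleton_self c)
    simp only [Finset.mem_insert, Finset.mem_singleton] at h3
    rcases h3 with h | h
    · exact hac h.symm
    · exact hbc h.symm
  have hsupΔ : Δ.sup Finset.card = 3 := by
    rw [dimZ] at hdim; omega
  have hcardΔ : ∀ G ∈ Δ, G.card ≤ 3 := fun G hG => hsupΔ ▸ Finset.le_sup hG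
  have hpure := hB.1
  have hfacet : ∀ F ∈ Δ, ∃ M ∈ Δ, F ⊆ M ∧ M.card = 3 := by
    intro F hF
    obtain ⟨M, hM, hMmax⟩ := Finset.exists_max_image (Δ.filter fun G => F ⊆ G) Finset.card
      ⟨F, Finset.mem_filter.2 ⟨hF, subset_rfl⟩⟩
    obtain ⟨hMΔ, hFM⟩ := Finset.mem_filter.1 hM
    refine ⟨M, hMΔ, hFM, ?_⟩
    have hmax : ∀ G ∈ Δ, M ⊆ G → M = G := by
      intro G hG hMG
      exact Finset.eq_of_subset_of_card_le hMG
        (hMmax G (Finset.mem_filter.2 ⟨hG, hFM.trans hMG⟩))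
    exact (hpure M hMΔ hmax).trans hsupΔ
  have hlinkdown : ∀ v : ℕ, ∀ F ∈ link Δ {v}, ∀ G ⊆ F, G ∈ link Δ {v} := by
    intro v F hF G hGF
    obtain ⟨hFΔ, hdis, hun⟩ := Finset.mem_filter.1 hF
    exact Finset.mem_filter.2 ⟨hdownΔ _ hFΔ G hGF,
      Finset.disjoint_of_subset_left hGF hdis,
      hdownΔ _ hun _ (Finset.union_subset_union hGF subset_rfl)⟩
  have hlinksup : ∀ v : ℕ, ({v} : Finset ℕ) ∈ Δ → (link Δ {v}).sup Finset.card = 2 := by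
    intro v hv
    apply le_antisymm
    · apply Finset.sup_le
      intro G hG
      obtain ⟨hGΔ, hdis, hun⟩ := Finset.mem_filter.1 hG
      have h1 := hcardΔ _ hun
      have h2 : (G ∪ {v}).card = G.card + 1 := by
        rw [Finset.card_union_of_disjoint hdis, Finset.card_singleton]
      omega
    · obtain ⟨M, hMΔ, hvM, hM3⟩ := hfacet {v} hv
      have hvM' : v ∈ M := hvM (Finset.mem_singleton_self v)
      have hMe : M.erase v ∪ {v} = M := by
        ext u
        simp only [Finset.mem_union, Finset.mem_erase, Finset.mem_singleton]
        constructor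
        · rintro (⟨_, h⟩ | rfl)
          · exact h
          · exact hvM'
        · intro hu
          by_cases h : u = v
          · exact Or.inr h
          · exact Or.inl ⟨h, hu⟩
      have herase : M.erase v ∈ link Δ {v} := by
        refine Finset.mem_filter.2 ⟨hdownΔ _ hMΔ _ (Finset.erase_subset _ _),
          Finset.disjoint_singleton_right.2 (Finset.notMem_erase _ _), ?_⟩
        rw [hMe]; exact hMΔ
      have hcard2 : (M.erase v).card = 2 := by
        rw [Finset.card_erase_of_mem hvM', hM3]
      exact hcard2 ▸ Finset.le_sup herase
  have h0link : ∀ v : ℕ, ({v} : Finset ℕ) ∈ Δ → (∅ : Finset ℕ) ∈ link Δ {v} := fun v hv =>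
    Finset.mem_filter.2 ⟨h0Δ, Finset.disjoint_empty_left _,
      by rw [Finset.empty_union]; exact hv⟩
  have hblinka : ({b} : Finset ℕ) ∈ link Δ {a} := by
    refine Finset.mem_filter.2 ⟨hbΔ, Finset.disjoint_singleton.2 (Ne.symm hab), ?_⟩
    have h1 : ({b} : Finset ℕ) ∪ {a} = {a, b} := by ext u; simp [or_comm]
    rw [h1]; exact habΔ
  have halinkb : ({a} : Finset ℕ) ∈ link Δ {b} := by
    refine Finset.mem_filter.2 ⟨haΔ, Finset.disjoint_singleton.2 hab, ?_⟩
    have h1 : ({a} : Finset ℕ) ∪ {b} = {a, b} := by ext u; simp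
    rw [h1]; exact habΔ
  have hclink : ∀ v : ℕ, ∀ G ∈ link Δ {v}, c ∉ G := fun v G hG =>
    hcnot G (Finset.mem_filter.1 hG).1
  -- link identities
  have hlka : link (Δ ∪ ({a, b, c} : Finset ℕ).powerset) {a}
      = link Δ {a} ∪ ({b, c} : Finset ℕ).powerset := by
    ext G
    simp only [link, Finset.mem_filter, Finset.mem_union, Finset.mem_powerset]
    constructor
    · rintro ⟨hG, hdis, hun⟩
      rcases hun with h1 | h1
      · exact Or.inl ⟨hdownΔ _ h1 G Finset.subset_union_left, hdis, h1⟩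
      · right
        intro u hu
        have hu2 := h1 (Finset.mem_union_left _ hu)
        rcases Finset.mem_insert.1 hu2 with rfl | hu3
        · exact absurd (Finset.mem_singleton_self u) (Finset.disjoint_left.1 hdis hu)
        · exact hu3
    · rintro (h1 | h1)
      · obtain ⟨hGΔ, hdis, hun⟩ := h1
        exact ⟨Or.inl hGΔ, hdis, Or.inl hun⟩
      · have hGP : G ⊆ {a, b, c} := h1.trans (by intro u hu; simp at hu; simp [hu])
        refine ⟨Or.inr hGP, ?_, Or.inr (Finset.union_subset hGP ?_)⟩
        · refine Finset.disjoint_singleton_right.2 (fun haG => ?_)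
          have h2 := h1 haG
          simp only [Finset.mem_insert, Finset.mem_singleton] at h2
          rcases h2 with h | h
          · exact hab h
          · exact hac h
        · intro u hu; simp at hu; simp [hu]
  have hlkb : link (Δ ∪ ({a, b, c} : Finset ℕ).powerset) {b}
      = link Δ {b} ∪ ({a, c} : Finset ℕ).powerset := by
    ext G
    simp only [link, Finset.mem_filter, Finset.mem_union, Finset.mem_powerset]
    constructor
    · rintro ⟨hG, hdis, hun⟩
      rcases hun with h1 | h1
      · exact Or.inl ⟨hdownΔ _ h1 G Finset.subset_union_left, hdis, h1⟩
      · right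
        intro u hu
        have hu2 := h1 (Finset.mem_union_left _ hu)
        simp only [Finset.mem_insert, Finset.mem_singleton] at hu2 ⊢
        rcases hu2 with rfl | rfl | rfl
        · exact Or.inl rfl
        · exact absurd (Finset.mem_singleton_self u) (Finset.disjoint_left.1 hdis hu)
        · exact Or.inr rfl
    · rintro (h1 | h1)
      · obtain ⟨hGΔ, hdis, hun⟩ := h1
        exact ⟨Or.inl hGΔ, hdis, Or.inl hun⟩
      · have hGP : G ⊆ {a, b, c} := h1.trans (by intro u hu; simp at hu; rcases hu with rfl | rfl <;> simp)
        refine ⟨Or.inr hGP, ?_, Or.inr (Finset.union_subset hGP ?_)⟩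
        · refine Finset.disjoint_singleton_right.2 (fun hbG => ?_)
          have h2 := h1 hbG
          simp only [Finset.mem_insert, Finset.mem_singleton] at h2
          rcases h2 with h | h
          · exact hab h.symm
          · exact hbc h
        · intro u hu; simp at hu; simp [hu]
  have hlkc : link (Δ ∪ ({a, b, c} : Finset ℕ).powerset) {c} = ({a, b} : Finset ℕ).powerset := by
    ext G
    simp only [link, Finset.mem_filter, Finset.mem_union, Finset.mem_powerset]
    constructor
    · rintro ⟨hG, hdis, hun⟩
      rcases hun with h1 | h1
      · exact absurd (Finset.mem_union_right G (Finset.mem_singleton_self c)) (hcnot _ h1)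
      · intro u hu
        have hu2 := h1 (Finset.mem_union_left _ hu)
        simp only [Finset.mem_insert, Finset.mem_singleton] at hu2 ⊢
        rcases hu2 with rfl | rfl | rfl
        · exact Or.inl rfl
        · exact Or.inr rfl
        · exact absurd (Finset.mem_singleton_self u) (Finset.disjoint_left.1 hdis hu)
    · intro h1
      have hGm : G ∈ Δ ∩ ({a, b, c} : Finset ℕ).powerset := by
        rw [hcap]; exact Finset.mem_powerset.2 h1
      refine ⟨Or.inl (Finset.mem_inter.1 hGm).1, ?_, Or.inr (Finset.union_subset ?_ ?_)⟩
      · refine Finset.disjoint_singleton_right.2 (fun hcG => ?_)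
        have h2 := h1 hcG
        simp only [Finset.mem_insert, Finset.mem_singleton] at h2
        rcases h2 with h | h
        · exact hac h.symm
        · exact hbc h.symm
      · exact h1.trans (by intro u hu; simp at hu; rcases hu with rfl | rfl <;> simp)
      · intro u hu; simp at hu; simp [hu]
  have hlkv : ∀ v : ℕ, v ≠ a → v ≠ b → v ≠ c →
      link (Δ ∪ ({a, b, c} : Finset ℕ).powerset) {v} = link Δ {v} := by
    intro v hva hvb hvc
    ext G
    simp only [link, Finset.mem_filter, Finset.mem_union]
    constructor
    · rintro ⟨hG, hdis, hun⟩
      rcases hun with h1 | h1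
      · exact ⟨hdownΔ _ h1 G Finset.subset_union_left, hdis, h1⟩
      · exfalso
        have h2 := Finset.mem_powerset.1 h1
          (Finset.mem_union_right G (Finset.mem_singleton_self v))
        simp only [Finset.mem_insert, Finset.mem_singleton] at h2
        rcases h2 with h | h | h
        · exact hva h
        · exact hvb h
        · exact hvc h
    · rintro ⟨hG, hdis, hun⟩
      exact ⟨Or.inl hG, hdis, Or.inl hun⟩
  -- Buchsbaum
  have habc3 : ({a, b, c} : Finset ℕ).card = 3 := card_triple a b c hab hac hbc
  have hsupΓ : (Δ ∪ ({a, b, c} : Finset ℕ).powerset).sup Finset.card = 3 := by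
    rw [Finset.sup_union, hsupΔ]
    have hP : (({a, b, c} : Finset ℕ).powerset).sup Finset.card = 3 :=
      le_antisymm (Finset.sup_le fun G hG =>
          (Finset.card_le_card (Finset.mem_powerset.1 hG)).trans_eq habc3)
        (habc3.symm.trans_le (Finset.le_sup (Finset.mem_powerset_self _)))
    rw [hP]; rfl
  have hBuch : IsBuchsbaum K (Δ ∪ ({a, b, c} : Finset ℕ).powerset) := by
    constructor
    · intro F hF hmax
      rw [hsupΓ]
      rcases Finset.mem_union.1 hF with h1 | h1
      · have h2 : F.card = Δ.sup Finset.card :=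
          hpure F h1 (fun G hG hFG => hmax G (Finset.mem_union_left _ hG) hFG)
        rw [h2, hsupΔ]
      · have h2 : F = {a, b, c} := hmax {a, b, c}
          (Finset.mem_union_right _ (Finset.mem_powerset_self _)) (Finset.mem_powerset.1 h1)
        rw [h2, habc3]
    · intro v hv
      by_cases hva : v = a
      · rw [hva, hlka]
        exact cm_pendant K (link Δ {a}) b c hbc (hlinkdown a) (h0link a haΔ) hblinka
          (hclink a) (hlinksup a haΔ) (hB.2 a haΔ)
      by_cases hvb : v = b
      · rw [hvb, hlkb]
        exact cm_pendant K (link Δ {b}) a c hac (hlinkdown b) (h0link b hbΔ) halinkb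
          (hclink b) (hlinksup b hbΔ) (hB.2 b hbΔ)
      by_cases hvc : v = c
      · rw [hvc, hlkc]
        exact cm_powerset_pair K a b hab
      · rw [hlkv v hva hvb hvc]
        apply hB.2 v
        rcases Finset.mem_union.1 hv with h1 | h1
        · exact h1
        · exfalso
          have h2 := Finset.mem_powerset.1 h1 (Finset.mem_singleton_self v)
          simp only [Finset.mem_insert, Finset.mem_singleton] at h2
          rcases h2 with h | h | h
          · exact hva h
          · exact hvb h
          · exact hvc h
  -- face counts
  have hF1 : facesOf (Δ ∪ ({a, b, c} : Finset ℕ).powerset) 1 = insert {c} (facesOf Δ 1) := by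
    rw [facesOf_union, facesOf_triple_one]
    have haF : ({a} : Finset ℕ) ∈ facesOf Δ 1 := Finset.mem_filter.2 ⟨haΔ, rfl⟩
    have hbF : ({b} : Finset ℕ) ∈ facesOf Δ 1 := Finset.mem_filter.2 ⟨hbΔ, rfl⟩
    ext G
    simp only [Finset.mem_union, Finset.mem_insert, Finset.mem_singleton]
    constructor
    · rintro (h | rfl | rfl | rfl)
      · exact Or.inr h
      · exact Or.inr haF
      · exact Or.inr hbF
      · exact Or.inl rfl
    · rintro (rfl | h)
      · exact Or.inr (Or.inr (Or.inr rfl))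
      · exact Or.inl h
  have hF2 : facesOf (Δ ∪ ({a, b, c} : Finset ℕ).powerset) 2
      = insert {a, c} (insert {b, c} (facesOf Δ 2)) := by
    rw [facesOf_union, facesOf_triple_two a b c hab hac hbc]
    have habF : ({a, b} : Finset ℕ) ∈ facesOf Δ 2 :=
      Finset.mem_filter.2 ⟨habΔ, Finset.card_pair hab⟩
    ext G
    simp only [Finset.mem_union, Finset.mem_insert, Finset.mem_singleton]
    constructor
    · rintro (h | rfl | rfl | rfl)
      · exact Or.inr (Or.inr h)
      · exact Or.inr (Or.inr habF)
      · exact Or.inl rfl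
      · exact Or.inr (Or.inl rfl)
    · rintro (rfl | rfl | h)
      · exact Or.inr (Or.inr (Or.inl rfl))
      · exact Or.inr (Or.inr (Or.inr rfl))
      · exact Or.inl h
  have hF3 : facesOf (Δ ∪ ({a, b, c} : Finset ℕ).powerset) 3
      = insert {a, b, c} (facesOf Δ 3) := by
    rw [facesOf_union, facesOf_triple_three a b c hab hac hbc, Finset.union_comm]
    ext G
    simp
  have hcnotF : ∀ (m : ℕ) (G : Finset ℕ), c ∈ G → G ∉ facesOf Δ m := by
    intro m G hcG hGm
    exact hcnot G (Finset.mem_filter.1 hGm).1 hcG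
  have hc1 : (facesOf (Δ ∪ ({a, b, c} : Finset ℕ).powerset) 1).card
      = (facesOf Δ 1).card + 1 := by
    rw [hF1, Finset.card_insert_of_notMem (hcnotF 1 {c} (Finset.mem_singleton_self c))]
  have hc2 : (facesOf (Δ ∪ ({a, b, c} : Finset ℕ).powerset) 2).card
      = (facesOf Δ 2).card + 2 := by
    have h1 : ({b, c} : Finset ℕ) ∉ facesOf Δ 2 := hcnotF 2 _ (by simp)
    have h2 : ({a, c} : Finset ℕ) ∉ insert ({b, c} : Finset ℕ) (facesOf Δ 2) := by
      intro hmem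
      rcases Finset.mem_insert.1 hmem with h | h
      · have : a ∈ ({b, c} : Finset ℕ) := h ▸ Finset.mem_insert_self a {c}
        simp only [Finset.mem_insert, Finset.mem_singleton] at this
        rcases this with h' | h'
        · exact hab h'
        · exact hac h'
      · exact hcnotF 2 _ (by simp) h
    rw [hF2, Finset.card_insert_of_notMem h2, Finset.card_insert_of_notMem h1]
  have hc3 : (facesOf (Δ ∪ ({a, b, c} : Finset ℕ).powerset) 3).card
      = (facesOf Δ 3).card + 1 := by
    rw [hF3, Finset.card_insert_of_notMem (hcnotF 3 _ (by simp))]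
  refine ⟨hBuch, ?_, ?_, ?_, ?_⟩
  · simp [hVec, fVec]
  · simp only [hVec, fVec, Finset.sum_range_succ, Finset.sum_range_zero]
    rw [hc1]
    norm_num [Nat.choose]
    ring_nf
  · simp only [hVec, fVec, Finset.sum_range_succ, Finset.sum_range_zero]
    rw [hc1, hc2]
    norm_num [Nat.choose]
    ring_nf
  · simp only [hVec, fVec, Finset.sum_range_succ, Finset.sum_range_zero]
    rw [hc1, hc2, hc3]
    norm_num [Nat.choose]
    ring_nf
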